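/- arXiv:1905.02445 — 3 statements merged into one kernel-verified Lean document; each statement's English description precedes it below -/
import Mathlib

section
/- Let G ⊆ K_{m,n} be a connected bipartite graph and let A = A₁ ⊔ A₂ ∈ I_G^(*) with A₁ ⊆ U₁ nonempty (A₂ ⊆ U₂ possibly empty). Suppose the induced subgraph G[A₁ ⊔ N(A₁)] has exactly d connected components with vertex sets X_i ⊔ N(X_i) (X_i ⊆ A₁, N(X_i) ⊆ N(A₁)) for i = 1,…,d, that the induced subgraph G[(U₁ ∖ A₁) ⊔ (U₂ ∖ N(A₁))] is connected, and that A₂ ≠ ∅ or d ≥ 2. Then for each i ∈ {1,…,d}, the set C^i := X_i ⊔ (A₂ ∪ ⋃_{j≠i} N(X_j)) is a two-sided maximal independent set of G whose associated subgraph G{C^i} has exactly two connected components; that is, C^i is a first independent set of G. -/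
/-!
Common setup: a bipartite graph `G ⊆ K_{m,n}` is encoded by an edge relation
`E : Fin m → Fin n → Prop` (vertex set `V = Fin m ⊕ Fin n`, with `U₁` the left
summand and `U₂` the right summand).
-/

namespace ToricBipartite

open Sum Finset

variable {m n : ℕ}

/-- The simple graph on `Fin m ⊕ Fin n` determined by the bipartite edge relation `E`. -/
def toGraph (E : Fin m → Fin n → Prop) : SimpleGraph (Fin m ⊕ Fin n) where
  Adj u v :=
    (∃ i j, u = inl i ∧ v = inr j ∧ E i j) ∨ (∃ i j, u = inr j ∧ v = inl i ∧ E i j)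
  symm := by
    constructor
    rintro u v (⟨i, j, hu, hv, h⟩ | ⟨i, j, hu, hv, h⟩)
    · exact Or.inr ⟨i, j, hv, hu, h⟩
    · exact Or.inl ⟨i, j, hv, hu, h⟩
  loopless := by
    constructor
    rintro u (⟨i, j, hu, hv, h⟩ | ⟨i, j, hu, hv, h⟩) <;> rw [hu] at hv <;> simp at hv

/-- The generator `e^i + f^j` of the dual edge cone. -/
def gen (i : Fin m) (j : Fin n) : (Fin m ⊕ Fin n) → ℝ :=
  Pi.single (inl i) 1 + Pi.single (inr j) 1

/-- The set of generators `{e^i + f^j : (i, m+j) ∈ E(G)}` of the dual edge cone. -/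
def genSet (E : Fin m → Fin n → Prop) : Set ((Fin m ⊕ Fin n) → ℝ) :=
  {x | ∃ i j, E i j ∧ x = gen i j}

/-- The dual edge cone `σ_G^∨ ⊆ ℝ^{m+n}`: all nonnegative combinations of the
generators `e^i + f^j` over the edges of `G`. -/
def dualEdgeCone (E : Fin m → Fin n → Prop) : Set ((Fin m ⊕ Fin n) → ℝ) :=
  {x | ∃ c : Fin m → Fin n → ℝ, (∀ i j, 0 ≤ c i j) ∧ (∀ i j, c i j ≠ 0 → E i j) ∧
      x = ∑ i, ∑ j, c i j • gen i j}

/-- The neighbour set `N(A) ⊆ U₂` of a set `A ⊆ U₁`. -/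
def nbrR (E : Fin m → Fin n → Prop) [∀ i j, Decidable (E i j)]
    (A : Finset (Fin m)) : Finset (Fin n) :=
  univ.filter fun j => ∃ i ∈ A, E i j

/-- The neighbour set `N(B) ⊆ U₁` of a set `B ⊆ U₂`. -/
def nbrL (E : Fin m → Fin n → Prop) [∀ i j, Decidable (E i j)]
    (B : Finset (Fin n)) : Finset (Fin m) :=
  univ.filter fun i => ∃ j ∈ B, E i j

/-- `A₁ ⊔ A₂ ⊆ U₁ ⊔ U₂` contains no pair of adjacent vertices (since the graph is
bipartite this says there is no edge between `A₁` and `A₂`). -/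
def IsIndepPair (E : Fin m → Fin n → Prop)
    (A₁ : Finset (Fin m)) (A₂ : Finset (Fin n)) : Prop :=
  ∀ i ∈ A₁, ∀ j ∈ A₂, ¬ E i j

/-- A two-sided independent set `B₁ ⊔ B₂`, with `∅ ≠ B₁ ⊊ U₁` and `∅ ≠ B₂ ⊊ U₂`. -/
def TwoSidedIndep (E : Fin m → Fin n → Prop)
    (B₁ : Finset (Fin m)) (B₂ : Finset (Fin n)) : Prop :=
  B₁.Nonempty ∧ B₁ ≠ univ ∧ B₂.Nonempty ∧ B₂ ≠ univ ∧ IsIndepPair E B₁ B₂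

/-- A two-sided *maximal* independent set: two-sided independent, and contained in no
strictly larger independent set of the graph. -/
def TwoSidedMaxIndep (E : Fin m → Fin n → Prop)
    (A₁ : Finset (Fin m)) (A₂ : Finset (Fin n)) : Prop :=
  TwoSidedIndep E A₁ A₂ ∧
    ∀ B₁ B₂, IsIndepPair E B₁ B₂ → A₁ ⊆ B₁ → A₂ ⊆ B₂ → B₁ = A₁ ∧ B₂ = A₂

/-- Membership in `I_G^(*)`: either a two-sided maximal independent set, or a one-sided
independent set of the form `U_i ∖ {v}` not contained in any two-sided independent set.
A set is encoded as the pair of its parts `(A₁, A₂) = (A ∩ U₁, A ∩ U₂)`. -/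
def InIStar (E : Fin m → Fin n → Prop)
    (A₁ : Finset (Fin m)) (A₂ : Finset (Fin n)) : Prop :=
  TwoSidedMaxIndep E A₁ A₂ ∨
    (A₂ = ∅ ∧ A₁.Nonempty ∧ (∃ v, A₁ = {v}ᶜ) ∧
      ¬ ∃ B₁ B₂, TwoSidedIndep E B₁ B₂ ∧ A₁ ⊆ B₁) ∨
    (A₁ = ∅ ∧ A₂.Nonempty ∧ (∃ v, A₂ = {v}ᶜ) ∧
      ¬ ∃ B₁ B₂, TwoSidedIndep E B₁ B₂ ∧ A₂ ⊆ B₂)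

/-- The edge relation of the associated (spanning) subgraph `G{A}` of `A ∈ I_G^(*)`:
for one-sided `A = A₁ ⊆ U₁` the edges of `G[A₁ ⊔ N(A₁)] ⊔ G[(U₁∖A₁) ⊔ (U₂∖N(A₁))]`,
symmetrically for one-sided `A = A₂ ⊆ U₂`, and for two-sided `A = A₁ ⊔ A₂` the edges of
`G[A₁ ⊔ N(A₁)] ⊔ G[A₂ ⊔ N(A₂)]`. -/
def assoc (E : Fin m → Fin n → Prop) [∀ i j, Decidable (E i j)]
    (A₁ : Finset (Fin m)) (A₂ : Finset (Fin n)) : Fin m → Fin n → Prop := fun i j =>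
  E i j ∧
    (if A₂ = ∅ then i ∈ A₁ ∨ j ∉ nbrR E A₁
     else if A₁ = ∅ then j ∈ A₂ ∨ i ∉ nbrL E A₂
     else i ∈ A₁ ∨ j ∈ A₂)

instance (E : Fin m → Fin n → Prop) [∀ i j, Decidable (E i j)]
    (A₁ : Finset (Fin m)) (A₂ : Finset (Fin n)) (i : Fin m) (j : Fin n) :
    Decidable (assoc E A₁ A₂ i j) := by
  unfold assoc; infer_instance

/-- The number of connected components of the bipartite graph with edge relation `E`
(isolated vertices count as connected components). -/
noncomputable def numComponents (E : Fin m → Fin n → Prop) : ℕ :=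
  Nat.card (toGraph E).ConnectedComponent

/-- `A ∈ I_G^(1)`: a first independent set, i.e. an element of `I_G^(*)` whose associated
subgraph `G{A}` has exactly two connected components. -/
def FirstIndep (E : Fin m → Fin n → Prop) [∀ i j, Decidable (E i j)]
    (A₁ : Finset (Fin m)) (A₂ : Finset (Fin n)) : Prop :=
  InIStar E A₁ A₂ ∧ numComponents (assoc E A₁ A₂) = 2

/-- The supporting hyperplane `H_{A₁}` of a one-sided set `A₁ ⊆ U₁`:
`Σ_{v ∈ A₁} x_v = Σ_{v ∈ N(A₁)} x_v`. -/
def hyp1 (E : Fin m → Fin n → Prop) [∀ i j, Decidable (E i j)]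
    (A₁ : Finset (Fin m)) : Set ((Fin m ⊕ Fin n) → ℝ) :=
  {x | ∑ i ∈ A₁, x (inl i) = ∑ j ∈ nbrR E A₁, x (inr j)}

/-- The supporting hyperplane `H_{A₂}` of a one-sided set `A₂ ⊆ U₂`. -/
def hyp2 (E : Fin m → Fin n → Prop) [∀ i j, Decidable (E i j)]
    (A₂ : Finset (Fin n)) : Set ((Fin m ⊕ Fin n) → ℝ) :=
  {x | ∑ j ∈ A₂, x (inr j) = ∑ i ∈ nbrL E A₂, x (inl i)}

/-- The supporting hyperplane `H_A` of `A = A₁ ⊔ A₂`, taken with respect to a nonempty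
one-sided part of `A`. -/
def hypA (E : Fin m → Fin n → Prop) [∀ i j, Decidable (E i j)]
    (A₁ : Finset (Fin m)) (A₂ : Finset (Fin n)) : Set ((Fin m ⊕ Fin n) → ℝ) :=
  if A₁ = ∅ then hyp2 E A₂ else hyp1 E A₁

/-- Connectivity of the induced subgraph `G[S ⊔ T]` for `S ⊆ U₁`, `T ⊆ U₂`. -/
def InducedConnected (E : Fin m → Fin n → Prop)
    (S : Finset (Fin m)) (T : Finset (Fin n)) : Prop :=
  ((toGraph E).induce
    ((inl '' (S : Set (Fin m)) ∪ inr '' (T : Set (Fin n))) : Set (Fin m ⊕ Fin n))).Connected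

/-- The degree (valency) sequence of the bipartite graph with edge relation `E`,
as a vector in `ℝ^{m+n}`. -/
def valVec (E : Fin m → Fin n → Prop) [∀ i j, Decidable (E i j)] :
    (Fin m ⊕ Fin n) → ℝ :=
  Sum.elim (fun i => ((univ.filter fun j => E i j).card : ℝ))
    (fun j => ((univ.filter fun i => E i j).card : ℝ))

section Aux

variable {E : Fin m → Fin n → Prop} [∀ i j, Decidable (E i j)]

lemma tb_exists_not_mem {α : Type*} [Fintype α] {s : Finset α} (h : s ≠ univ) :
    ∃ a, a ∉ s := by
  by_contra hc; push_neg at hc; exact h (Finset.eq_univ_iff_forall.mpr hc)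

lemma mem_nbrR {A : Finset (Fin m)} {j : Fin n} : j ∈ nbrR E A ↔ ∃ i ∈ A, E i j := by
  simp [nbrR]

lemma toGraph_adj_inl_inr {E : Fin m → Fin n → Prop} {i : Fin m} {j : Fin n} :
    (toGraph E).Adj (inl i) (inr j) ↔ E i j := by
  constructor
  · rintro (⟨a, b, h1, h2, h⟩ | ⟨a, b, h1, h2, h⟩)
    · injection h1 with h1; injection h2 with h2; subst h1; subst h2; exact h
    · simp at h1
  · intro h
    exact Or.inl ⟨i, j, rfl, rfl, h⟩

lemma toGraph_adj_inl {E : Fin m → Fin n → Prop} {i : Fin m} {u : Fin m ⊕ Fin n}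
    (h : (toGraph E).Adj (inl i) u) : ∃ j, u = inr j ∧ E i j := by
  rcases h with ⟨a, b, h1, h2, h⟩ | ⟨a, b, h1, h2, h⟩
  · injection h1 with h1; subst h1; exact ⟨b, h2, h⟩
  · simp at h1

lemma toGraph_adj_inr {E : Fin m → Fin n → Prop} {j : Fin n} {u : Fin m ⊕ Fin n}
    (h : (toGraph E).Adj (inr j) u) : ∃ i, u = inl i ∧ E i j := by
  rcases h with ⟨a, b, h1, h2, h⟩ | ⟨a, b, h1, h2, h⟩
  · simp at h1
  · injection h1 with h1; subst h1; exact ⟨a, h2, h⟩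

lemma exists_adj_of_reachable {V : Type*} {G : SimpleGraph V} {u w : V}
    (h : G.Reachable u w) (huw : u ≠ w) : ∃ x, G.Adj u x := by
  obtain ⟨p⟩ := h
  cases p with
  | nil => exact absurd rfl huw
  | cons h' _ => exact ⟨_, h'⟩

lemma walk_const {V : Type*} {G : SimpleGraph V} {β : Sort*} (f : V → β)
    (hf : ∀ u w, G.Adj u w → f u = f w) {u w : V} (p : G.Walk u w) : f u = f w := by
  induction p with
  | nil => rfl
  | cons h _ ih => exact (hf _ _ h).trans ih

lemma reachable_of_connected_induce {V : Type*} {G H : SimpleGraph V} (W : Set V)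
    (hc : (G.induce W).Connected)
    (hGH : ∀ a b, a ∈ W → b ∈ W → G.Adj a b → H.Adj a b)
    {u w : V} (hu : u ∈ W) (hw : w ∈ W) : H.Reachable u w := by
  have hle : G.induce W ≤ H.induce W := by
    rintro ⟨a, ha⟩ ⟨b, hb⟩ hab
    exact hGH a b ha hb hab
  have h2 := (hc.mono hle).preconnected ⟨u, hu⟩ ⟨w, hw⟩
  simpa using h2.map (SimpleGraph.Embedding.induce W).toHom

lemma mem_side_left {B : Finset (Fin m)} {C : Finset (Fin n)} {p : Fin m}
    (h : (inl p : Fin m ⊕ Fin n) ∈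
      ((inl '' (B : Set (Fin m)) ∪ inr '' (C : Set (Fin n))) : Set (Fin m ⊕ Fin n))) :
    p ∈ B := by
  rcases h with ⟨x, hx, hxe⟩ | ⟨x, hx, hxe⟩
  · injection hxe with hxe; subst hxe; exact hx
  · simp at hxe

lemma mem_side_right {B : Finset (Fin m)} {C : Finset (Fin n)} {q : Fin n}
    (h : (inr q : Fin m ⊕ Fin n) ∈
      ((inl '' (B : Set (Fin m)) ∪ inr '' (C : Set (Fin n))) : Set (Fin m ⊕ Fin n))) :
    q ∈ C := by
  rcases h with ⟨x, hx, hxe⟩ | ⟨x, hx, hxe⟩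
  · simp at hxe
  · injection hxe with hxe; subst hxe; exact hx

lemma left_mem_side {B : Finset (Fin m)} {C : Finset (Fin n)} {p : Fin m} (h : p ∈ B) :
    (inl p : Fin m ⊕ Fin n) ∈
      ((inl '' (B : Set (Fin m)) ∪ inr '' (C : Set (Fin n))) : Set (Fin m ⊕ Fin n)) :=
  Or.inl ⟨p, h, rfl⟩

lemma right_mem_side {B : Finset (Fin m)} {C : Finset (Fin n)} {q : Fin n} (h : q ∈ C) :
    (inr q : Fin m ⊕ Fin n) ∈
      ((inl '' (B : Set (Fin m)) ∪ inr '' (C : Set (Fin n))) : Set (Fin m ⊕ Fin n)) :=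
  Or.inr ⟨q, h, rfl⟩

end Aux

/-- Let `A = A₁ ⊔ A₂ ∈ I_G^(*)` with `A₁ ≠ ∅`. Suppose `G[A₁ ⊔ N(A₁)]`
has exactly `d` connected components, with vertex sets `X i ⊔ N(X i)` (so the `X i` are
nonempty, partition `A₁`, have pairwise disjoint neighbourhoods, and each
`G[X i ⊔ N(X i)]` is connected), that `G[(U₁ ∖ A₁) ⊔ (U₂ ∖ N(A₁))]` is connected, and
that `A₂ ≠ ∅` or `d ≥ 2`. Then for each `i`, the set
`C^i = X i ⊔ (A₂ ∪ ⋃_{j ≠ i} N(X j))` is a two-sided maximal independent set of `G`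
whose associated subgraph has exactly two connected components, i.e. `C^i ∈ I_G^(1)`. -/
theorem component_sets_are_first_indep (m n : ℕ) (E : Fin m → Fin n → Prop)
    [∀ i j, Decidable (E i j)] (hconn : (toGraph E).Connected)
    (A₁ : Finset (Fin m)) (A₂ : Finset (Fin n)) (hA₁ : A₁.Nonempty)
    (hstar : InIStar E A₁ A₂)
    (d : ℕ) (X : Fin d → Finset (Fin m))
    (hXne : ∀ i, (X i).Nonempty)
    (hXdisj : ∀ i j, i ≠ j → Disjoint (X i) (X j))
    (hXunion : Finset.univ.biUnion X = A₁)
    (hNdisj : ∀ i j, i ≠ j → Disjoint (nbrR E (X i)) (nbrR E (X j)))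
    (hXconn : ∀ i, InducedConnected E (X i) (nbrR E (X i)))
    (hrest : InducedConnected E A₁ᶜ (nbrR E A₁)ᶜ)
    (hcase : A₂ ≠ ∅ ∨ 2 ≤ d) :
    ∀ i : Fin d,
      TwoSidedMaxIndep E (X i)
        (A₂ ∪ (Finset.univ.erase i).biUnion fun j => nbrR E (X j)) ∧
      FirstIndep E (X i)
        (A₂ ∪ (Finset.univ.erase i).biUnion fun j => nbrR E (X j)) := by
  classical
  obtain ⟨a0, ha0⟩ := hA₁
  -- there is a right-hand vertex
  have hnn : Nonempty (Fin n) := by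
    rcases hstar with hmax | hone | hone2
    · obtain ⟨j0, -⟩ := hmax.1.2.2.1; exact ⟨j0⟩
    · obtain ⟨-, -, ⟨v, hv⟩, -⟩ := hone
      have hva : (inl a0 : Fin m ⊕ Fin n) ≠ inl v := by
        intro h
        injection h with h
        subst h
        rw [hv] at ha0; simp at ha0
      obtain ⟨x, hx⟩ :=
        exists_adj_of_reachable (hconn.preconnected (inl a0) (inl v)) hva
      obtain ⟨j, -, -⟩ := toGraph_adj_inl hx
      exact ⟨j⟩
    · exact absurd hone2.1 (Finset.nonempty_iff_ne_empty.mp ⟨a0, ha0⟩)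
  obtain ⟨j0⟩ := hnn
  have hdegL : ∀ i : Fin m, ∃ j, E i j := by
    intro i
    obtain ⟨x, hx⟩ :=
      exists_adj_of_reachable (hconn.preconnected (inl i) (inr j0)) (by simp)
    obtain ⟨j, -, hj⟩ := toGraph_adj_inl hx
    exact ⟨j, hj⟩
  -- partition facts
  have hXsub : ∀ k, X k ⊆ A₁ := by
    intro k
    rw [← hXunion]
    exact Finset.subset_biUnion_of_mem X (Finset.mem_univ k)
  have hXmem : ∀ i' ∈ A₁, ∃ k, i' ∈ X k := by
    intro i' hi'
    rw [← hXunion] at hi'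
    obtain ⟨k, -, hk⟩ := Finset.mem_biUnion.mp hi'
    exact ⟨k, hk⟩
  have hNsub : ∀ k, nbrR E (X k) ⊆ nbrR E A₁ := by
    intro k j' hj'
    obtain ⟨i', hi', h⟩ := mem_nbrR.mp hj'
    exact mem_nbrR.mpr ⟨i', hXsub k hi', h⟩
  have hcover : ∀ j' ∈ nbrR E A₁, ∃ k, j' ∈ nbrR E (X k) := by
    intro j' hj'
    obtain ⟨i', hi', h⟩ := mem_nbrR.mp hj'
    obtain ⟨k, hk⟩ := hXmem i' hi'
    exact ⟨k, mem_nbrR.mpr ⟨i', hk, h⟩⟩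
  have hF4 : ∀ (k : Fin d) (c : Fin n) (i' : Fin m),
      c ∈ nbrR E (X k) → i' ∈ A₁ → E i' c → i' ∈ X k := by
    intro k c i' hc hi' h
    obtain ⟨k', hk'⟩ := hXmem i' hi'
    have hc' : c ∈ nbrR E (X k') := mem_nbrR.mpr ⟨i', hk', h⟩
    by_cases hkk : k' = k
    · subst hkk; exact hk'
    · exact absurd hc (Finset.disjoint_left.mp (hNdisj k' k hkk) hc')
  have hNne : ∀ k, (nbrR E (X k)).Nonempty := by
    intro k
    obtain ⟨x, hx⟩ := hXne k
    obtain ⟨j, hj⟩ := hdegL x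
    exact ⟨j, mem_nbrR.mpr ⟨x, hx, hj⟩⟩
  -- normalize the `I*` hypothesis
  have hstar' : TwoSidedMaxIndep E A₁ A₂ ∨
      (A₂ = ∅ ∧ (∃ v, A₁ = {v}ᶜ) ∧ nbrR E A₁ = Finset.univ) := by
    rcases hstar with hmax | hone | hone2
    · exact Or.inl hmax
    · obtain ⟨hA2e, -, ⟨v, hv⟩, hno⟩ := hone
      refine Or.inr ⟨hA2e, ⟨v, hv⟩, ?_⟩
      by_contra hne
      obtain ⟨c0, hc0⟩ := tb_exists_not_mem hne
      obtain ⟨j1, hj1⟩ := hdegL a0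
      have hj1' : j1 ∈ nbrR E A₁ := mem_nbrR.mpr ⟨a0, ha0, hj1⟩
      refine hno ⟨A₁, (nbrR E A₁)ᶜ,
        ⟨⟨a0, ha0⟩, ?_, ⟨c0, Finset.mem_compl.mpr hc0⟩, ?_, ?_⟩, subset_rfl⟩
      · rw [hv]
        intro hcu
        have := Finset.mem_univ v
        rw [← hcu, Finset.mem_compl, Finset.mem_singleton] at this
        exact this rfl
      · intro hcu
        have := Finset.mem_univ j1
        rw [← hcu, Finset.mem_compl] at this
        exact this hj1'
      · intro i hi j hj h
        exact (Finset.mem_compl.mp hj) (mem_nbrR.mpr ⟨i, hi, h⟩)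
    · exact absurd hone2.1 (Finset.nonempty_iff_ne_empty.mp ⟨a0, ha0⟩)
  have hP : ∀ c, c ∈ A₂ ↔ c ∉ nbrR E A₁ := by
    rcases hstar' with hmax | ⟨hA2e, -, hNu⟩
    · have hsub2 : A₂ ⊆ (nbrR E A₁)ᶜ := by
        intro c hc
        rw [Finset.mem_compl]
        intro hcN
        obtain ⟨i', hi', h⟩ := mem_nbrR.mp hcN
        exact hmax.1.2.2.2.2 i' hi' c hc h
      have hind : IsIndepPair E A₁ (nbrR E A₁)ᶜ := by
        intro i hi j hj h
        exact (Finset.mem_compl.mp hj) (mem_nbrR.mpr ⟨i, hi, h⟩)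
      have hE2 := (hmax.2 A₁ (nbrR E A₁)ᶜ hind subset_rfl hsub2).2
      intro c
      rw [← hE2, Finset.mem_compl]
    · intro c
      simp [hA2e, hNu]
  have hA₁c : ∃ i', i' ∉ A₁ := by
    rcases hstar' with hmax | ⟨-, ⟨v, hv⟩, -⟩
    · exact tb_exists_not_mem hmax.1.2.1
    · exact ⟨v, by rw [hv]; simp⟩
  obtain ⟨ia, hia⟩ := hA₁c
  -- each component has an edge leaving it (to `A₁ᶜ`)
  have hleave : ∀ k : Fin d, ∃ i', i' ∉ A₁ ∧ ∃ c ∈ nbrR E (X k), E i' c := by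
    intro k
    obtain ⟨x, hx⟩ := hXne k
    set W : Set (Fin m ⊕ Fin n) :=
      Sum.elim (fun i' => i' ∈ X k) (fun c => c ∈ nbrR E (X k)) with hW
    have hxW : (inl x : Fin m ⊕ Fin n) ∈ W := hx
    have hiaW : (inl ia : Fin m ⊕ Fin n) ∉ W := fun h => hia (hXsub k h)
    obtain ⟨p⟩ := hconn.preconnected (inl x) (inl ia)
    obtain ⟨dt, -, hd1, hd2⟩ := p.exists_boundary_dart W hxW hiaW
    rcases dt.adj with ⟨a, b, h1, h2, h⟩ | ⟨a, b, h1, h2, h⟩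
    · rw [h1] at hd1; rw [h2] at hd2
      exact absurd (mem_nbrR.mpr ⟨a, hd1, h⟩ : b ∈ nbrR E (X k)) hd2
    · rw [h1] at hd1; rw [h2] at hd2
      refine ⟨a, ?_, b, hd1, h⟩
      intro haA
      exact hd2 (hF4 k b a hd1 haA h)
  -- no vertex outside `A₁` has all its neighbours inside a single `N(X i₀)`
  have hadd : ∀ i', i' ∉ A₁ → ∀ i₀ : Fin d,
      (∀ c, E i' c → c ∈ nbrR E (X i₀)) → False := by
    intro i' hi' i₀ hall
    rcases hstar' with hmax | ⟨hA2e, ⟨v, hv⟩, -⟩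
    · have hind : IsIndepPair E (insert i' A₁) A₂ := by
        intro i hi j hj h
        rcases Finset.mem_insert.mp hi with rfl | hi
        · exact (hP j).mp hj (hNsub i₀ (hall j h))
        · exact hmax.1.2.2.2.2 i hi j hj h
      have h1 := (hmax.2 (insert i' A₁) A₂ hind (Finset.subset_insert _ _) subset_rfl).1
      exact hi' (Finset.insert_eq_self.mp h1)
    · have hd2 : 2 ≤ d := by
        rcases hcase with h | h
        · exact absurd hA2e h
        · exact h
      have : Nontrivial (Fin d) := Fin.nontrivial_iff_two_le.mpr hd2
      obtain ⟨k, hk⟩ := exists_ne i₀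
      obtain ⟨i'', hi'', c, hc, hE2⟩ := hleave k
      have h1 : i'' = v := by
        by_contra hne
        exact hi'' (by rw [hv]; simpa using hne)
      have h2 : i' = v := by
        by_contra hne
        exact hi' (by rw [hv]; simpa using hne)
      rw [h1, ← h2] at hE2
      exact Finset.disjoint_left.mp (hNdisj k i₀ hk) hc (hall c hE2)
  -- now fix a component
  intro i₀
  set T := A₂ ∪ (Finset.univ.erase i₀).biUnion (fun j => nbrR E (X j)) with hTdef
  have hTmem : ∀ c, c ∈ T ↔ (c ∈ A₂ ∨ ∃ j, j ≠ i₀ ∧ c ∈ nbrR E (X j)) := by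
    intro c
    simp only [hTdef, Finset.mem_union, Finset.mem_biUnion, Finset.mem_erase,
      Finset.mem_univ, and_true]
  have hTc : ∀ c, c ∉ T ↔ c ∈ nbrR E (X i₀) := by
    intro c
    constructor
    · intro hc
      have hcA2 : c ∉ A₂ := fun h => hc ((hTmem c).mpr (Or.inl h))
      have hcN : c ∈ nbrR E A₁ := by
        by_contra hcN
        exact hcA2 ((hP c).mpr hcN)
      obtain ⟨k, hk⟩ := hcover c hcN
      by_cases hki : k = i₀
      · subst hki; exact hk
      · exact absurd ((hTmem c).mpr (Or.inr ⟨k, hki, hk⟩)) hc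
    · intro hc hcT
      rcases (hTmem c).mp hcT with h | ⟨k, hki, hk⟩
      · exact (hP c).mp h (hNsub i₀ hc)
      · exact Finset.disjoint_left.mp (hNdisj k i₀ hki) hk hc
  have hST : IsIndepPair E (X i₀) T := by
    intro i hi j hj h
    exact (hTc j).mpr (mem_nbrR.mpr ⟨i, hi, h⟩) hj
  have hSne : (X i₀).Nonempty := hXne i₀
  have hSneu : X i₀ ≠ Finset.univ := by
    intro h
    exact hia (hXsub i₀ (by rw [h]; exact Finset.mem_univ ia))
  have hTne : T.Nonempty := by
    rcases hcase with h | h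
    · obtain ⟨c, hc⟩ := Finset.nonempty_iff_ne_empty.mpr h
      exact ⟨c, (hTmem c).mpr (Or.inl hc)⟩
    · have : Nontrivial (Fin d) := Fin.nontrivial_iff_two_le.mpr h
      obtain ⟨k, hk⟩ := exists_ne i₀
      obtain ⟨c, hc⟩ := hNne k
      exact ⟨c, (hTmem c).mpr (Or.inr ⟨k, hk, hc⟩)⟩
  have hTneu : T ≠ Finset.univ := by
    obtain ⟨c, hc⟩ := hNne i₀
    intro h
    exact ((hTc c).mpr hc) (by rw [h]; exact Finset.mem_univ c)
  have hTS : TwoSidedIndep E (X i₀) T := ⟨hSne, hSneu, hTne, hTneu, hST⟩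
  have hMax : TwoSidedMaxIndep E (X i₀) T := by
    refine ⟨hTS, ?_⟩
    intro B₁ B₂ hB hSB hTB
    have hB1 : B₁ ⊆ X i₀ := by
      intro i' hi'B
      by_contra hi'S
      have hex : ∃ c ∈ T, E i' c := by
        by_cases hi'A : i' ∈ A₁
        · obtain ⟨k, hk⟩ := hXmem i' hi'A
          have hki : k ≠ i₀ := fun h => hi'S (by rw [← h]; exact hk)
          obtain ⟨c, hc⟩ := hdegL i'
          exact ⟨c, (hTmem c).mpr (Or.inr ⟨k, hki, mem_nbrR.mpr ⟨i', hk, hc⟩⟩), hc⟩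
        · by_contra hno
          push_neg at hno
          refine hadd i' hi'A i₀ ?_
          intro c hc
          exact (hTc c).mp (fun hcT => hno c hcT hc)
      obtain ⟨c, hcT, hE2⟩ := hex
      exact hB i' hi'B c (hTB hcT) hE2
    have hB2 : B₂ ⊆ T := by
      intro c hcB
      by_contra hcT
      have hcN : c ∈ nbrR E (X i₀) := (hTc c).mp hcT
      obtain ⟨x, hx, hE2⟩ := mem_nbrR.mp hcN
      exact hB x (hSB hx) c hcB hE2
    exact ⟨Finset.Subset.antisymm hB1 hSB, Finset.Subset.antisymm hB2 hTB⟩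
  refine ⟨hMax, Or.inl hMax, ?_⟩
  -- count the components of the associated subgraph
  have hTe : T ≠ ∅ := Finset.nonempty_iff_ne_empty.mp hTne
  have hSe : X i₀ ≠ ∅ := Finset.nonempty_iff_ne_empty.mp hSne
  have hE' : ∀ p q, assoc E (X i₀) T p q ↔ (E p q ∧ (p ∈ X i₀ ∨ q ∈ T)) := by
    intro p q
    unfold assoc
    rw [if_neg hTe, if_neg hSe]
  set f : (Fin m ⊕ Fin n) → Bool :=
    Sum.elim (fun i' => decide (i' ∈ X i₀)) (fun c => decide (c ∈ nbrR E (X i₀)))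
    with hfdef
  have hfadj : ∀ u w, (toGraph (assoc E (X i₀) T)).Adj u w → f u = f w := by
    have key : ∀ (p : Fin m) (q : Fin n), assoc E (X i₀) T p q →
        (p ∈ X i₀ ↔ q ∈ nbrR E (X i₀)) := by
      intro p q hpq
      obtain ⟨hEpq, hor⟩ := (hE' p q).mp hpq
      constructor
      · intro hp; exact mem_nbrR.mpr ⟨p, hp, hEpq⟩
      · intro hq
        rcases hor with h | h
        · exact h
        · exact absurd h ((hTc q).mpr hq)
    intro u w huw
    rcases huw with ⟨p, q, h1, h2, h⟩ | ⟨p, q, h1, h2, h⟩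
    · subst h1; subst h2
      simp only [hfdef, Sum.elim_inl, Sum.elim_inr]
      exact decide_eq_decide.mpr (key p q h)
    · subst h1; subst h2
      simp only [hfdef, Sum.elim_inl, Sum.elim_inr]
      exact decide_eq_decide.mpr (key p q h).symm
  have hfwalk : ∀ u w (p : (toGraph (assoc E (X i₀) T)).Walk u w), p.IsPath → f u = f w :=
    fun u w p _ => walk_const f hfadj p
  set g : (toGraph (assoc E (X i₀) T)).ConnectedComponent → Bool :=
    SimpleGraph.ConnectedComponent.lift f hfwalk with hgdef
  -- transfer connectivity of induced subgraphs of `G` to reachability in `G{A}`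
  have htrans : ∀ (B : Finset (Fin m)) (C : Finset (Fin n)), InducedConnected E B C →
      (∀ (p : Fin m) (q : Fin n), p ∈ B → q ∈ C → E p q → (p ∈ X i₀ ∨ q ∈ T)) →
      ∀ u w, u ∈ ((inl '' (B : Set (Fin m)) ∪ inr '' (C : Set (Fin n))) : Set (Fin m ⊕ Fin n)) →
             w ∈ ((inl '' (B : Set (Fin m)) ∪ inr '' (C : Set (Fin n))) : Set (Fin m ⊕ Fin n)) →
      (toGraph (assoc E (X i₀) T)).Reachable u w := by
    intro B C hBC hok u w hu hw
    refine reachable_of_connected_induce _ hBC ?_ hu hw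
    intro a b ha hb hab
    rcases hab with ⟨p, q, h1, h2, h⟩ | ⟨p, q, h1, h2, h⟩
    · subst h1; subst h2
      have hpB := mem_side_left ha
      have hqC := mem_side_right hb
      exact toGraph_adj_inl_inr.mpr ((hE' p q).mpr ⟨h, hok p q hpB hqC h⟩)
    · subst h1; subst h2
      have hqC := mem_side_right ha
      have hpB := mem_side_left hb
      exact (toGraph_adj_inl_inr.mpr ((hE' p q).mpr ⟨h, hok p q hpB hqC h⟩)).symm
  have hWr : ∀ u w,
      u ∈ ((inl '' ((A₁ᶜ : Finset (Fin m)) : Set (Fin m)) ∪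
        inr '' (((nbrR E A₁)ᶜ : Finset (Fin n)) : Set (Fin n))) : Set (Fin m ⊕ Fin n)) →
      w ∈ ((inl '' ((A₁ᶜ : Finset (Fin m)) : Set (Fin m)) ∪
        inr '' (((nbrR E A₁)ᶜ : Finset (Fin n)) : Set (Fin n))) : Set (Fin m ⊕ Fin n)) →
      (toGraph (assoc E (X i₀) T)).Reachable u w := by
    refine htrans A₁ᶜ (nbrR E A₁)ᶜ hrest ?_
    intro p q hp hq h
    exact Or.inr ((hTmem q).mpr (Or.inl ((hP q).mpr (Finset.mem_compl.mp hq))))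
  have hpiece : ∀ k, k ≠ i₀ → ∀ u,
      u ∈ ((inl '' ((X k : Finset (Fin m)) : Set (Fin m)) ∪
        inr '' ((nbrR E (X k) : Finset (Fin n)) : Set (Fin n))) : Set (Fin m ⊕ Fin n)) →
      (toGraph (assoc E (X i₀) T)).Reachable u (inl ia) := by
    intro k hk u hu
    obtain ⟨i'', hi'', c, hc, hE2⟩ := hleave k
    have r1 : (toGraph (assoc E (X i₀) T)).Reachable u (inr c) :=
      htrans (X k) (nbrR E (X k)) (hXconn k)
        (fun p q _ hq _ => Or.inr ((hTmem q).mpr (Or.inr ⟨k, hk, hq⟩)))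
        u (inr c) hu (right_mem_side hc)
    have r2 : (toGraph (assoc E (X i₀) T)).Adj (inl i'') (inr c) :=
      toGraph_adj_inl_inr.mpr
        ((hE' i'' c).mpr ⟨hE2, Or.inr ((hTmem c).mpr (Or.inr ⟨k, hk, hc⟩))⟩)
    have r3 : (toGraph (assoc E (X i₀) T)).Reachable (inl i'') (inl ia) :=
      hWr (inl i'') (inl ia) (left_mem_side (Finset.mem_compl.mpr hi''))
        (left_mem_side (Finset.mem_compl.mpr hia))
    exact r1.trans (r2.symm.reachable.trans r3)
  have hreach2 : ∀ u, f u = false →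
      (toGraph (assoc E (X i₀) T)).Reachable u (inl ia) := by
    intro u hu
    cases u with
    | inl p =>
      have hpS : p ∉ X i₀ := by simpa [hfdef] using hu
      by_cases hpA : p ∈ A₁
      · obtain ⟨k, hk⟩ := hXmem p hpA
        have hki : k ≠ i₀ := fun h => hpS (by rw [← h]; exact hk)
        exact hpiece k hki (inl p) (left_mem_side hk)
      · exact hWr (inl p) (inl ia) (left_mem_side (Finset.mem_compl.mpr hpA))
          (left_mem_side (Finset.mem_compl.mpr hia))
    | inr q =>
      have hqS : q ∉ nbrR E (X i₀) := by simpa [hfdef] using hu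
      by_cases hqA : q ∈ nbrR E A₁
      · obtain ⟨k, hk⟩ := hcover q hqA
        have hki : k ≠ i₀ := fun h => hqS (by rw [← h]; exact hk)
        exact hpiece k hki (inr q) (right_mem_side hk)
      · exact hWr (inr q) (inl ia) (right_mem_side (Finset.mem_compl.mpr hqA))
          (left_mem_side (Finset.mem_compl.mpr hia))
  have hreach1 : ∀ u w, f u = true → f w = true →
      (toGraph (assoc E (X i₀) T)).Reachable u w := by
    have h1 := htrans (X i₀) (nbrR E (X i₀)) (hXconn i₀) (fun p q hp _ _ => Or.inl hp)
    intro u w hu hw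
    refine h1 u w ?_ ?_
    · cases u with
      | inl p => exact left_mem_side (by simpa [hfdef] using hu)
      | inr q => exact right_mem_side (by simpa [hfdef] using hu)
    · cases w with
      | inl p => exact left_mem_side (by simpa [hfdef] using hw)
      | inr q => exact right_mem_side (by simpa [hfdef] using hw)
  have hgb : Function.Bijective g := by
    constructor
    · intro c1 c2 hgc
      obtain ⟨u, rfl⟩ := c1.exists_rep
      obtain ⟨w, rfl⟩ := c2.exists_rep
      have hgc' : f u = f w := hgc
      clear hgc
      rename' hgc' => hgc
      apply SimpleGraph.ConnectedComponent.sound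
      cases hfu : f u with
      | true =>
        have hfw : f w = true := by rw [← hgc]; exact hfu
        exact hreach1 u w hfu hfw
      | false =>
        have hfw : f w = false := by rw [← hgc]; exact hfu
        exact (hreach2 u hfu).trans (hreach2 w hfw).symm
    · intro b
      cases b with
      | true =>
        obtain ⟨x, hx⟩ := hSne
        refine ⟨(toGraph (assoc E (X i₀) T)).connectedComponentMk (inl x), ?_⟩
        rw [hgdef]
        simp [hfdef, hx]
      | false =>
        refine ⟨(toGraph (assoc E (X i₀) T)).connectedComponentMk (inl ia), ?_⟩
        rw [hgdef]
        simp only [SimpleGraph.ConnectedComponent.lift_mk, hfdef, Sum.elim_inl]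
        simp only [decide_eq_false_iff_not]
        exact fun h => hia (hXsub i₀ h)
  have hcard := Nat.card_eq_of_bijective g hgb
  unfold numComponents
  rw [hcard]
  simp [Nat.card_eq_fintype_card]

end ToricBipartite
end

section
/- Let G ⊆ K_{m,n} be a connected bipartite graph and let A ∈ I_G^(1) be a first independent set. Let Val(A) ∈ ℝ^{m+n} be the degree sequence of the associated subgraph G{A}, i.e., the vector whose v-th coordinate is the number of edges of G{A} incident to the vertex v. Then Val(A) lies in the relative interior (intrinsic interior) of the facet H_A ∩ σ_G^∨ of the dual edge cone σ_G^∨. -/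
/-!
Common setup: a bipartite graph `G ⊆ K_{m,n}` is encoded by an edge relation
`E : Fin m → Fin n → Prop` (vertex set `V = Fin m ⊕ Fin n`, with `U₁` the left
summand and `U₂` the right summand).
-/

namespace ToricBipartite

open Sum Finset

variable {m n : ℕ}

set_option linter.unusedSectionVars false

noncomputable section

def gE (P : Fin m → Fin n → Prop) [∀ i j, Decidable (P i j)] :
    Fin m → Fin n → ((Fin m ⊕ Fin n) → ℝ) := fun i j => if P i j then gen i j else 0

def Phi (P : Fin m → Fin n → Prop) [∀ i j, Decidable (P i j)] :
    (Fin m → Fin n → ℝ) →ₗ[ℝ] ((Fin m ⊕ Fin n) → ℝ) :=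
  ∑ i, ∑ j, ((LinearMap.proj (R := ℝ) (φ := fun _ : Fin n => ℝ) j).comp
    (LinearMap.proj (R := ℝ) (φ := fun _ : Fin m => Fin n → ℝ) i)).smulRight (gE P i j)

lemma Phi_apply (P : Fin m → Fin n → Prop) [∀ i j, Decidable (P i j)] (c : Fin m → Fin n → ℝ) :
    Phi P c = ∑ i, ∑ j, c i j • gE P i j := by
  simp [Phi, LinearMap.sum_apply]

def Lf (S₁ : Finset (Fin m)) (S₂ : Finset (Fin n)) : ((Fin m ⊕ Fin n) → ℝ) →ₗ[ℝ] ℝ :=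
  (∑ i ∈ S₁, LinearMap.proj (R := ℝ) (φ := fun _ : Fin m ⊕ Fin n => ℝ) (inl i)) -
    ∑ j ∈ S₂, LinearMap.proj (inr j)

lemma Lf_apply (S₁ : Finset (Fin m)) (S₂ : Finset (Fin n)) (x : (Fin m ⊕ Fin n) → ℝ) :
    Lf S₁ S₂ x = ∑ i ∈ S₁, x (inl i) - ∑ j ∈ S₂, x (inr j) := by
  simp [Lf, LinearMap.sum_apply]

lemma gen_apply_inl (i : Fin m) (j : Fin n) (i' : Fin m) :
    gen i j (inl i') = if i' = i then 1 else 0 := by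
  simp [gen, Pi.single_apply]

lemma gen_apply_inr (i : Fin m) (j : Fin n) (j' : Fin n) :
    gen i j (inr j') = if j' = j then 1 else 0 := by
  simp [gen, Pi.single_apply]

lemma Lf_gen (S₁ : Finset (Fin m)) (S₂ : Finset (Fin n)) (i : Fin m) (j : Fin n) :
    Lf S₁ S₂ (gen i j) =
      (if i ∈ S₁ then (1 : ℝ) else 0) - (if j ∈ S₂ then (1 : ℝ) else 0) := by
  rw [Lf_apply]
  congr 1
  · simp_rw [gen_apply_inl]; rw [Finset.sum_ite_eq' S₁ i (fun _ => (1:ℝ))]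
  · simp_rw [gen_apply_inr]; rw [Finset.sum_ite_eq' S₂ j (fun _ => (1:ℝ))]

section Abstract

variable (E P : Fin m → Fin n → Prop) [∀ i j, Decidable (E i j)] [∀ i j, Decidable (P i j)]
variable (S₁ : Finset (Fin m)) (S₂ : Finset (Fin n))

/-- The facet. -/
def Fset : Set ((Fin m ⊕ Fin n) → ℝ) :=
  {x | ∑ i ∈ S₁, x (inl i) = ∑ j ∈ S₂, x (inr j)} ∩ dualEdgeCone E

variable {E P S₁ S₂}
variable (hPE : ∀ i j, P i j → E i j)
    (key : ∀ i j, E i j → (P i j ↔ (i ∈ S₁ ↔ j ∈ S₂)))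

include hPE key in
lemma Phi_mem_F (c : Fin m → Fin n → ℝ) (hc : ∀ i j, 0 ≤ c i j) :
    Phi P c ∈ Fset E S₁ S₂ := by
  have hLgE : ∀ i j, Lf S₁ S₂ (gE P i j) = 0 := by
    intro i j
    by_cases hP : P i j
    · rw [gE, if_pos hP, Lf_gen]
      have := (key i j (hPE i j hP)).1 hP
      by_cases h1 : i ∈ S₁
      · rw [if_pos h1, if_pos (this.1 h1)]; ring
      · rw [if_neg h1, if_neg (fun h2 => h1 (this.2 h2))]; ring
    · rw [gE, if_neg hP]; exact map_zero _
  constructor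
  · have : Lf S₁ S₂ (Phi P c) = 0 := by
      rw [Phi_apply, map_sum]
      refine Finset.sum_eq_zero fun i _ => ?_
      rw [map_sum]
      refine Finset.sum_eq_zero fun j _ => ?_
      rw [map_smul, hLgE, smul_zero]
    rw [Lf_apply] at this
    exact sub_eq_zero.1 this
  · refine ⟨fun i j => if P i j then c i j else 0, fun i j => ?_, fun i j h => ?_, ?_⟩
    · dsimp only; split
      · exact hc i j
      · exact le_refl _
    · by_cases hP : P i j
      · exact hPE i j hP
      · simp [hP] at h
    · rw [Phi_apply]
      refine Finset.sum_congr rfl fun i _ => Finset.sum_congr rfl fun j _ => ?_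
      by_cases hP : P i j <;> simp [gE, hP]

include hPE key in
lemma gE_mem_F (i : Fin m) (j : Fin n) : gE P i j ∈ Fset E S₁ S₂ := by
  have h : gE P i j = Phi P (fun i' j' => if i' = i then (if j' = j then 1 else 0) else 0) := by
    rw [Phi_apply]
    rw [Finset.sum_eq_single i (fun b _ hb => Finset.sum_eq_zero fun j' _ => by
      simp [hb]) (by simp)]
    rw [Finset.sum_eq_single j (fun b _ hb => by simp [hb]) (by simp)]
    simp
  rw [h]
  refine Phi_mem_F hPE key _ fun i' j' => ?_
  split <;> [skip; exact le_refl _]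
  split <;> [exact zero_le_one; exact le_refl _]

lemma nested_zero {f : Fin m → Fin n → ℝ} (h : ∀ i j, f i j ≤ 0)
    (hs : ∑ i, ∑ j, f i j = 0) : ∀ i j, f i j = 0 := by
  intro i j
  have houter : ∀ i' ∈ (univ : Finset (Fin m)), (∑ j', f i' j') ≤ 0 :=
    fun i' _ => Finset.sum_nonpos fun j' _ => h i' j'
  have h1 : ∑ j', f i j' = 0 :=
    (Finset.sum_eq_zero_iff_of_nonpos houter).1 hs i (mem_univ i)
  exact (Finset.sum_eq_zero_iff_of_nonpos fun j' _ => h i j').1 h1 j (mem_univ j)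

include hPE key in
lemma F_subset_range
    (hsign : (∀ i j, E i j → i ∈ S₁ → j ∈ S₂) ∨ (∀ i j, E i j → j ∈ S₂ → i ∈ S₁)) :
    Fset E S₁ S₂ ⊆ Set.range (Phi P) := by
  rintro x ⟨hx1, c, hc0, hcE, rfl⟩
  set t : Fin m → Fin n → ℝ :=
    fun i j => c i j * ((if i ∈ S₁ then (1:ℝ) else 0) - (if j ∈ S₂ then (1:ℝ) else 0)) with ht
  have hLx : ∑ i, ∑ j, t i j = 0 := by
    have : Lf S₁ S₂ (∑ i, ∑ j, c i j • gen i j) = 0 := by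
      rw [Lf_apply]; exact sub_eq_zero.2 hx1
    rw [map_sum] at this
    simp_rw [map_sum, map_smul, Lf_gen, smul_eq_mul] at this
    exact this
  have htz : ∀ i j, t i j = 0 := by
    rcases hsign with hs | hs
    · refine nested_zero (fun i j => ?_) hLx
      simp only [ht]
      rcases eq_or_lt_of_le (hc0 i j) with h0 | h0
      · rw [← h0, zero_mul]
      · have hE := hcE i j (ne_of_gt h0)
        refine mul_nonpos_of_nonneg_of_nonpos (hc0 i j) ?_
        by_cases h1 : i ∈ S₁
        · rw [if_pos h1, if_pos (hs i j hE h1)]; norm_num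
        · rw [if_neg h1]; split <;> norm_num
    · have hneg : ∀ i j, -t i j ≤ 0 := by
        intro i j
        rw [neg_nonpos]
        simp only [ht]
        rcases eq_or_lt_of_le (hc0 i j) with h0 | h0
        · rw [← h0, zero_mul]
        · have hE := hcE i j (ne_of_gt h0)
          refine mul_nonneg (hc0 i j) ?_
          by_cases h2 : j ∈ S₂
          · rw [if_pos h2, if_pos (hs i j hE h2)]; norm_num
          · rw [if_neg h2]; split <;> norm_num
      have hsum : ∑ i, ∑ j, -t i j = 0 := by
        have h1 : ∑ i, ∑ j, -t i j = -∑ i, ∑ j, t i j := by simp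
        rw [h1, hLx, neg_zero]
      intro i j
      have h2 := nested_zero (f := fun i j => -t i j) hneg hsum i j
      have h3 : -t i j = 0 := h2
      linarith
  have hcP : ∀ i j, c i j ≠ 0 → P i j := by
    intro i j hc
    have h := htz i j
    rw [ht] at h
    rcases mul_eq_zero.1 h with h' | h'
    · exact absurd h' hc
    · refine (key i j (hcE i j hc)).2 ?_
      constructor <;> intro hmem
      · by_contra h2
        rw [if_pos hmem, if_neg h2] at h'; norm_num at h'
      · by_contra h1
        rw [if_neg h1, if_pos hmem] at h'; norm_num at h'
  refine ⟨c, ?_⟩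
  rw [Phi_apply]
  refine Finset.sum_congr rfl fun i _ => Finset.sum_congr rfl fun j _ => ?_
  by_cases hP : P i j
  · rw [gE, if_pos hP]
  · have : c i j = 0 := by by_contra h; exact hP (hcP i j h)
    simp [this]

lemma valVec_eq_Phi_one : valVec P = Phi P (fun _ _ => 1) := by
  funext v
  rw [Phi_apply]
  cases v with
  | inl i₀ =>
    simp only [Finset.sum_apply, Pi.smul_apply, smul_eq_mul, one_mul, valVec, Sum.elim_inl]
    have : ∀ i j, gE P i j (inl i₀) = if i₀ = i then (if P i j then (1:ℝ) else 0) else 0 := by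
      intro i j
      by_cases hP : P i j
      · rw [gE, if_pos hP, gen_apply_inl]; split <;> simp [hP]
      · simp [gE, hP]
    simp_rw [this]
    rw [Finset.sum_comm]
    simp_rw [Finset.sum_ite_eq (univ : Finset (Fin m)) i₀, if_pos (mem_univ i₀)]
    rw [Finset.sum_boole]
  | inr j₀ =>
    simp only [Finset.sum_apply, Pi.smul_apply, smul_eq_mul, one_mul, valVec, Sum.elim_inr]
    have : ∀ i j, gE P i j (inr j₀) = if j₀ = j then (if P i j then (1:ℝ) else 0) else 0 := by
      intro i j
      by_cases hP : P i j
      · rw [gE, if_pos hP, gen_apply_inr]; split <;> simp [hP]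
      · simp [gE, hP]
    simp_rw [this]
    simp_rw [Finset.sum_ite_eq (univ : Finset (Fin n)) j₀, if_pos (mem_univ j₀)]
    rw [Finset.sum_boole]

include hPE key in
lemma abstract_main
    (hsign : (∀ i j, E i j → i ∈ S₁ → j ∈ S₂) ∨ (∀ i j, E i j → j ∈ S₂ → i ∈ S₁)) :
    valVec P ∈ intrinsicInterior ℝ (Fset E S₁ S₂) := by
  classical
  set F := Fset E S₁ S₂ with hF
  -- the range of Phi
  set W : Submodule ℝ ((Fin m ⊕ Fin n) → ℝ) := LinearMap.range (Phi P) with hW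
  have h0F : (0 : (Fin m ⊕ Fin n) → ℝ) ∈ F := by
    have := Phi_mem_F hPE key (fun _ _ => 0) (fun _ _ => le_refl 0)
    rwa [show Phi P (fun _ _ => (0:ℝ)) = 0 from map_zero _] at this
  have hFW : F ⊆ (W : Set ((Fin m ⊕ Fin n) → ℝ)) := F_subset_range hPE key hsign
  have hWspan : W ≤ Submodule.span ℝ F := by
    rintro x ⟨c, rfl⟩
    rw [Phi_apply]
    refine Submodule.sum_mem _ fun i _ => Submodule.sum_mem _ fun j _ => ?_
    exact Submodule.smul_mem _ _ (Submodule.subset_span (gE_mem_F hPE key i j))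
  have hspanW : Submodule.span ℝ F = W := le_antisymm (Submodule.span_le.2 hFW) hWspan
  have hspan : ((affineSpan ℝ F : AffineSubspace ℝ ((Fin m ⊕ Fin n) → ℝ)) : Set _) =
      (W : Set ((Fin m ⊕ Fin n) → ℝ)) := by
    rw [← hspanW]
    conv_lhs => rw [← Set.insert_eq_self.2 h0F]
    rw [affineSpan_insert_zero]
  -- the continuous linear map onto W
  let Φc : (Fin m → Fin n → ℝ) →L[ℝ] W := LinearMap.toContinuousLinearMap (Phi P).rangeRestrict
  have hΦcsurj : Function.Surjective Φc := LinearMap.surjective_rangeRestrict (Phi P)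
  have hopenmap : IsOpenMap Φc := ContinuousLinearMap.isOpenMap Φc hΦcsurj
  -- the open positive orthant
  set O : Set (Fin m → Fin n → ℝ) := {c | ∀ i j, 0 < c i j} with hO
  have hOopen : IsOpen O := by
    have : O = ⋂ i, ⋂ j, {c : Fin m → Fin n → ℝ | 0 < c i j} := by
      ext c; simp [hO, Set.mem_iInter]
    rw [this]
    refine isOpen_iInter_of_finite fun i => isOpen_iInter_of_finite fun j => ?_
    have hc : Continuous fun c : Fin m → Fin n → ℝ => c i j :=
      (continuous_apply j).comp (continuous_apply i)
    exact isOpen_lt continuous_const hc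
  have hval : valVec P = Phi P (fun _ _ => 1) := valVec_eq_Phi_one
  have hvalF : valVec P ∈ F := by
    rw [hval]; exact Phi_mem_F hPE key _ (fun _ _ => zero_le_one)
  rw [mem_intrinsicInterior]
  refine ⟨⟨valVec P, subset_affineSpan ℝ F hvalF⟩, ?_, rfl⟩
  obtain ⟨T, hTopen, hTeq⟩ := isOpen_induced_iff.1 (hopenmap O hOopen)
  refine mem_interior.2 ⟨Subtype.val ⁻¹' T, ?_, hTopen.preimage continuous_subtype_val, ?_⟩
  · rintro ⟨z, hz⟩ hzT
    show z ∈ F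
    have hzW : z ∈ W := by
      have h1 : z ∈ ((affineSpan ℝ F : AffineSubspace ℝ _) : Set _) := hz
      rw [hspan] at h1
      exact h1
    have hmem : (⟨z, hzW⟩ : W) ∈ Φc '' O := by
      rw [← hTeq]; exact hzT
    obtain ⟨c, hcO, hc⟩ := hmem
    have hphi : Phi P c = z := congrArg Subtype.val hc
    rw [← hphi]
    exact Phi_mem_F hPE key c (fun i j => (hcO i j).le)
  · show valVec P ∈ T
    have h1O : (fun _ _ => (1:ℝ)) ∈ O := fun i j => one_pos
    have hmem : Φc (fun _ _ => 1) ∈ Φc '' O := ⟨_, h1O, rfl⟩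
    rw [← hTeq] at hmem
    rw [hval]
    exact hmem

end Abstract

end

/-- For a first independent set `A ∈ I_G^(1)` of a connected bipartite
graph `G ⊆ K_{m,n}`, the degree sequence `Val(A)` of the associated subgraph `G{A}` lies
in the relative (intrinsic) interior of the facet `H_A ∩ σ_G^∨` of the dual edge cone. -/
theorem valVec_mem_intrinsicInterior (m n : ℕ) (E : Fin m → Fin n → Prop)
    [∀ i j, Decidable (E i j)] (hconn : (toGraph E).Connected)
    (A₁ : Finset (Fin m)) (A₂ : Finset (Fin n)) (hA : FirstIndep E A₁ A₂) :
    valVec (assoc E A₁ A₂) ∈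
      intrinsicInterior ℝ (hypA E A₁ A₂ ∩ dualEdgeCone E) := by
  classical
  obtain ⟨hstar, -⟩ := hA
  rcases hstar with ⟨⟨hA1ne, -, hA2ne, -, hind⟩, hmax⟩ | ⟨hA2e, hA1ne, -, -⟩ |
    ⟨hA1e, hA2ne, -, -⟩
  · -- two-sided maximal case
    have h1 : A₁ ≠ ∅ := hA1ne.ne_empty
    have h2 : A₂ ≠ ∅ := hA2ne.ne_empty
    have hhyp : hypA E A₁ A₂ = hyp1 E A₁ := if_neg h1
    have hassoc : ∀ i j, assoc E A₁ A₂ i j ↔ E i j ∧ (i ∈ A₁ ∨ j ∈ A₂) := by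
      intro i j; simp only [assoc, if_neg h1, if_neg h2]
    have hPE : ∀ i j, assoc E A₁ A₂ i j → E i j := fun i j h => h.1
    have hsign : ∀ i j, E i j → i ∈ A₁ → j ∈ nbrR E A₁ := fun i j hE hi =>
      mem_filter.2 ⟨mem_univ j, ⟨i, hi, hE⟩⟩
    have key : ∀ i j, E i j → (assoc E A₁ A₂ i j ↔ (i ∈ A₁ ↔ j ∈ nbrR E A₁)) := by
      intro i j hE
      rw [hassoc]
      constructor
      · rintro ⟨-, hi | hj⟩
        · exact iff_of_true hi (hsign i j hE hi)
        · refine iff_of_false (fun hi => hind i hi j hj hE) fun hjn => ?_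
          obtain ⟨-, i', hi', hE'⟩ := mem_filter.1 hjn
          exact hind i' hi' j hj hE'
      · intro hiff
        refine ⟨hE, ?_⟩
        by_cases hi : i ∈ A₁
        · exact Or.inl hi
        · right
          have hjn : j ∉ nbrR E A₁ := fun hj => hi (hiff.2 hj)
          have hpair : IsIndepPair E A₁ (insert j A₂) := by
            intro i' hi' j' hj'
            rcases mem_insert.1 hj' with rfl | hj'
            · exact fun hE' => hjn (mem_filter.2 ⟨mem_univ j', ⟨i', hi', hE'⟩⟩)
            · exact hind i' hi' j' hj'
          have := (hmax A₁ (insert j A₂) hpair (subset_refl _)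
            (subset_insert _ _)).2
          rw [← this]
          exact mem_insert_self _ _
    rw [hhyp]
    exact abstract_main hPE key (Or.inl hsign)
  · -- one-sided case `A ⊆ U₁`
    have h1 : A₁ ≠ ∅ := hA1ne.ne_empty
    have hhyp : hypA E A₁ A₂ = hyp1 E A₁ := if_neg h1
    have hassoc : ∀ i j, assoc E A₁ A₂ i j ↔ E i j ∧ (i ∈ A₁ ∨ j ∉ nbrR E A₁) := by
      intro i j; simp only [assoc, if_pos hA2e]
    have hPE : ∀ i j, assoc E A₁ A₂ i j → E i j := fun i j h => h.1
    have hsign : ∀ i j, E i j → i ∈ A₁ → j ∈ nbrR E A₁ := fun i j hE hi =>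
      mem_filter.2 ⟨mem_univ j, ⟨i, hi, hE⟩⟩
    have key : ∀ i j, E i j → (assoc E A₁ A₂ i j ↔ (i ∈ A₁ ↔ j ∈ nbrR E A₁)) := by
      intro i j hE
      rw [hassoc]
      constructor
      · rintro ⟨-, hi | hj⟩
        · exact iff_of_true hi (hsign i j hE hi)
        · exact iff_of_false (fun hi => hj (hsign i j hE hi)) hj
      · intro hiff
        refine ⟨hE, ?_⟩
        by_cases hi : i ∈ A₁
        · exact Or.inl hi
        · exact Or.inr fun hj => hi (hiff.2 hj)
    rw [hhyp]
    exact abstract_main hPE key (Or.inl hsign)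
  · -- one-sided case `A ⊆ U₂`
    have hhyp : hypA E A₁ A₂ = hyp2 E A₂ := if_pos hA1e
    have h2 : A₂ ≠ ∅ := hA2ne.ne_empty
    have hassoc : ∀ i j, assoc E A₁ A₂ i j ↔ E i j ∧ (j ∈ A₂ ∨ i ∉ nbrL E A₂) := by
      intro i j; simp only [assoc, if_neg h2, if_pos hA1e]
    have hPE : ∀ i j, assoc E A₁ A₂ i j → E i j := fun i j h => h.1
    have hsign : ∀ i j, E i j → j ∈ A₂ → i ∈ nbrL E A₂ := fun i j hE hj =>
      mem_filter.2 ⟨mem_univ i, ⟨j, hj, hE⟩⟩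
    have key : ∀ i j, E i j → (assoc E A₁ A₂ i j ↔ (i ∈ nbrL E A₂ ↔ j ∈ A₂)) := by
      intro i j hE
      rw [hassoc]
      constructor
      · rintro ⟨-, hj | hi⟩
        · exact iff_of_true (hsign i j hE hj) hj
        · exact iff_of_false hi fun hj => hi (hsign i j hE hj)
      · intro hiff
        refine ⟨hE, ?_⟩
        by_cases hj : j ∈ A₂
        · exact Or.inl hj
        · exact Or.inr fun hi => hj (hiff.1 hi)
    have hset : hyp2 E A₂ = {x | ∑ i ∈ nbrL E A₂, x (inl i) = ∑ j ∈ A₂, x (inr j)} :=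
      Set.ext fun x => eq_comm
    rw [hhyp, hset]
    exact abstract_main hPE key (Or.inr hsign)

end ToricBipartite
end

section
/- Let G ⊆ K_{m,n} be a connected bipartite graph and let S be a nonempty finite set of first independent sets of G. Let G[S] := ⋂_{A∈S} G{A} be the intersection subgraph, the spanning subgraph of G whose edges are exactly the edges belonging to every associated subgraph G{A}, A ∈ S. Then ⋂_{A∈S} (H_A ∩ σ_G^∨) equals the convex cone generated by {e^i + f^j : (i, m+j) ∈ E(G[S])}. -/
/-!
Common setup: a bipartite graph `G ⊆ K_{m,n}` is encoded by an edge relation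
`E : Fin m → Fin n → Prop` (vertex set `V = Fin m ⊕ Fin n`, with `U₁` the left
summand and `U₂` the right summand).
-/

namespace ToricBipartite

open Sum Finset

variable {m n : ℕ}

/-- Auxiliary weight of an edge w.r.t. the hyperplane of `(A₁, A₂)`. -/
def wtAux (E : Fin m → Fin n → Prop) [∀ i j, Decidable (E i j)]
    (A₁ : Finset (Fin m)) (A₂ : Finset (Fin n)) (i : Fin m) (j : Fin n) : ℝ :=
  if A₁ = ∅ then (if j ∈ A₂ then 1 else 0) - (if i ∈ nbrL E A₂ then 1 else 0)
  else (if i ∈ A₁ then 1 else 0) - (if j ∈ nbrR E A₁ then 1 else 0)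

lemma mem_nbrR_iff (E : Fin m → Fin n → Prop) [∀ i j, Decidable (E i j)]
    (A₁ : Finset (Fin m)) (j : Fin n) : j ∈ nbrR E A₁ ↔ ∃ i ∈ A₁, E i j := by
  simp [nbrR]

lemma mem_nbrL_iff (E : Fin m → Fin n → Prop) [∀ i j, Decidable (E i j)]
    (A₂ : Finset (Fin n)) (i : Fin m) : i ∈ nbrL E A₂ ↔ ∃ j ∈ A₂, E i j := by
  simp [nbrL]

lemma eval_inl (c : Fin m → Fin n → ℝ) (i' : Fin m) :
    (∑ i, ∑ j, c i j • gen i j) (inl i') = ∑ j, c i' j := by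
  simp only [Finset.sum_apply, Pi.smul_apply, gen, Pi.add_apply, Pi.single_apply,
    smul_eq_mul]
  simp [Finset.sum_ite_eq, mul_ite]

lemma eval_inr (c : Fin m → Fin n → ℝ) (j' : Fin n) :
    (∑ i, ∑ j, c i j • gen i j) (inr j') = ∑ i, c i j' := by
  simp only [Finset.sum_apply, Pi.smul_apply, gen, Pi.add_apply, Pi.single_apply,
    smul_eq_mul]
  simp [Finset.sum_ite_eq, mul_ite]

lemma sum_ite_outer {α β : Type*} [DecidableEq α] [Fintype α] [Fintype β] (s : Finset α)
    (c : α → β → ℝ) :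
    (∑ x : α, ∑ y : β, if x ∈ s then c x y else 0) = ∑ x ∈ s, ∑ y, c x y := by
  have h : ∀ x : α, (∑ y : β, if x ∈ s then c x y else 0)
      = if x ∈ s then ∑ y, c x y else 0 := by
    intro x; split_ifs <;> simp
  simp only [h, Finset.sum_ite_mem, Finset.univ_inter]

lemma mem_hypA_iff (E : Fin m → Fin n → Prop) [∀ i j, Decidable (E i j)]
    (A₁ : Finset (Fin m)) (A₂ : Finset (Fin n)) (c : Fin m → Fin n → ℝ) :
    (∑ i, ∑ j, c i j • gen i j) ∈ hypA E A₁ A₂ ↔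
      ∑ i, ∑ j, c i j * wtAux E A₁ A₂ i j = 0 := by
  unfold hypA wtAux
  split_ifs with h
  · simp only [hyp2, Set.mem_setOf_eq, eval_inl, eval_inr]
    have key : ∑ i, ∑ j, c i j * ((if j ∈ A₂ then (1:ℝ) else 0) -
        (if i ∈ nbrL E A₂ then 1 else 0)) =
        (∑ j ∈ A₂, ∑ i, c i j) - ∑ i ∈ nbrL E A₂, ∑ j, c i j := by
      simp only [mul_sub, Finset.sum_sub_distrib, mul_ite, mul_one, mul_zero]
      congr 1
      · rw [Finset.sum_comm]
        exact sum_ite_outer A₂ fun x y => c y x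
      · exact sum_ite_outer (nbrL E A₂) c
    rw [key, sub_eq_zero]
  · simp only [hyp1, Set.mem_setOf_eq, eval_inl, eval_inr]
    have key : ∑ i, ∑ j, c i j * ((if i ∈ A₁ then (1:ℝ) else 0) -
        (if j ∈ nbrR E A₁ then 1 else 0)) =
        (∑ i ∈ A₁, ∑ j, c i j) - ∑ j ∈ nbrR E A₁, ∑ i, c i j := by
      simp only [mul_sub, Finset.sum_sub_distrib, mul_ite, mul_one, mul_zero]
      congr 1
      · exact sum_ite_outer A₁ c
      · rw [Finset.sum_comm]
        exact sum_ite_outer (nbrR E A₁) fun x y => c y x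
    rw [key, sub_eq_zero]

lemma wt_key (E : Fin m → Fin n → Prop) [∀ i j, Decidable (E i j)]
    {A₁ : Finset (Fin m)} {A₂ : Finset (Fin n)} (h : InIStar E A₁ A₂)
    (i : Fin m) (j : Fin n) (hE : E i j) :
    wtAux E A₁ A₂ i j ≤ 0 ∧ (wtAux E A₁ A₂ i j = 0 ↔ assoc E A₁ A₂ i j) := by
  rcases h with hms | ⟨hA2, hA1ne, _, _⟩ | ⟨hA1, hA2ne, _, _⟩
  · -- two-sided maximal
    obtain ⟨⟨hne1, _, hne2, _, hind⟩, hmax⟩ := hms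
    have hA1 : A₁ ≠ ∅ := Finset.nonempty_iff_ne_empty.mp hne1
    have hA2 : A₂ ≠ ∅ := Finset.nonempty_iff_ne_empty.mp hne2
    have hmem : ∀ j' : Fin n, j' ∈ A₂ ↔ j' ∉ nbrR E A₁ := by
      intro j'
      constructor
      · intro hj' hnbr
        obtain ⟨i', hi', hE'⟩ := (mem_nbrR_iff E A₁ j').mp hnbr
        exact hind i' hi' j' hj' hE'
      · intro hj'
        have hind' : IsIndepPair E A₁ (insert j' A₂) := by
          intro i' hi' j'' hj''
          rcases Finset.mem_insert.mp hj'' with rfl | hj''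
          · exact fun hE' => hj' ((mem_nbrR_iff E A₁ j'').mpr ⟨i', hi', hE'⟩)
          · exact hind i' hi' j'' hj''
        have := (hmax A₁ (insert j' A₂) hind' subset_rfl (Finset.subset_insert _ _)).2
        rw [← this]; exact Finset.mem_insert_self _ _
    unfold wtAux assoc
    rw [if_neg hA1, if_neg hA2, if_neg hA1]
    constructor
    · by_cases hi : i ∈ A₁
      · have : j ∈ nbrR E A₁ := (mem_nbrR_iff E A₁ j).mpr ⟨i, hi, hE⟩
        simp [hi, this]
      · split_ifs <;> simp [hi] <;> norm_num
    · constructor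
      · intro hw
        refine ⟨hE, ?_⟩
        by_cases hi : i ∈ A₁
        · exact Or.inl hi
        · right
          rw [hmem]
          intro hnbr
          simp [hi, hnbr] at hw
      · rintro ⟨-, hi | hj⟩
        · have : j ∈ nbrR E A₁ := (mem_nbrR_iff E A₁ j).mpr ⟨i, hi, hE⟩
          simp [hi, this]
        · have hjn : j ∉ nbrR E A₁ := (hmem j).mp hj
          have hi : i ∉ A₁ := fun hi => hjn ((mem_nbrR_iff E A₁ j).mpr ⟨i, hi, hE⟩)
          simp [hi, hjn]
  · -- one-sided, A₂ = ∅
    have hA1 : A₁ ≠ ∅ := Finset.nonempty_iff_ne_empty.mp hA1ne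
    unfold wtAux assoc
    rw [if_neg hA1, if_pos hA2]
    constructor
    · by_cases hi : i ∈ A₁
      · have : j ∈ nbrR E A₁ := (mem_nbrR_iff E A₁ j).mpr ⟨i, hi, hE⟩
        simp [hi, this]
      · split_ifs <;> simp [hi] <;> norm_num
    · constructor
      · intro hw
        refine ⟨hE, ?_⟩
        by_cases hi : i ∈ A₁
        · exact Or.inl hi
        · right
          intro hnbr
          simp [hi, hnbr] at hw
      · rintro ⟨-, hi | hj⟩
        · have : j ∈ nbrR E A₁ := (mem_nbrR_iff E A₁ j).mpr ⟨i, hi, hE⟩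
          simp [hi, this]
        · have hi : i ∉ A₁ := fun hi => hj ((mem_nbrR_iff E A₁ j).mpr ⟨i, hi, hE⟩)
          simp [hi, hj]
  · -- one-sided, A₁ = ∅
    have hA2 : A₂ ≠ ∅ := Finset.nonempty_iff_ne_empty.mp hA2ne
    unfold wtAux assoc
    rw [if_pos hA1, if_neg hA2, if_pos hA1]
    constructor
    · by_cases hj : j ∈ A₂
      · have : i ∈ nbrL E A₂ := (mem_nbrL_iff E A₂ i).mpr ⟨j, hj, hE⟩
        simp [hj, this]
      · split_ifs <;> simp [hj] <;> norm_num
    · constructor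
      · intro hw
        refine ⟨hE, ?_⟩
        by_cases hj : j ∈ A₂
        · exact Or.inl hj
        · right
          intro hnbr
          simp [hj, hnbr] at hw
      · rintro ⟨-, hj | hi⟩
        · have : i ∈ nbrL E A₂ := (mem_nbrL_iff E A₂ i).mpr ⟨j, hj, hE⟩
          simp [hj, this]
        · have hj : j ∉ A₂ := fun hj => hi ((mem_nbrL_iff E A₂ i).mpr ⟨j, hj, hE⟩)
          simp [hi, hj]

lemma double_sum_zero {f : Fin m → Fin n → ℝ} (hnp : ∀ i j, f i j ≤ 0)
    (h : ∑ i, ∑ j, f i j = 0) : ∀ i j, f i j = 0 := by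
  intro i j
  have h1 : ∀ i ∈ (univ : Finset (Fin m)), ∑ j, f i j ≤ 0 :=
    fun i _ => Finset.sum_nonpos fun j _ => hnp i j
  have h2 := (Finset.sum_eq_zero_iff_of_nonpos h1).mp h i (mem_univ i)
  exact (Finset.sum_eq_zero_iff_of_nonpos fun j _ => hnp i j).mp h2 j (mem_univ j)

/-- Let `S` be a nonempty finite family of first independent sets of a
connected bipartite graph `G ⊆ K_{m,n}`, and let `G[S] = ⋂_{A ∈ S} G{A}` be the
intersection subgraph. Then `⋂_{A ∈ S} (H_A ∩ σ_G^∨)` equals the convex cone generated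
by `{e^i + f^j : (i, m+j) ∈ E(G[S])}`, i.e. the dual edge cone of `G[S]`. -/
theorem iInter_facets_eq_dualEdgeCone (m n : ℕ) (E : Fin m → Fin n → Prop)
    [∀ i j, Decidable (E i j)] (hconn : (toGraph E).Connected)
    (ι : Type) [Fintype ι] [Nonempty ι]
    (F₁ : ι → Finset (Fin m)) (F₂ : ι → Finset (Fin n))
    (hF : ∀ a, FirstIndep E (F₁ a) (F₂ a)) :
    (⋂ a, (hypA E (F₁ a) (F₂ a) ∩ dualEdgeCone E)) =
      dualEdgeCone (fun i j => ∀ a, assoc E (F₁ a) (F₂ a) i j) := by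
  ext x
  simp only [Set.mem_iInter, Set.mem_inter_iff]
  constructor
  · intro hx
    obtain ⟨c, hc0, hcE, rfl⟩ := (hx (Classical.arbitrary ι)).2
    have hz : ∀ a i j, c i j ≠ 0 → assoc E (F₁ a) (F₂ a) i j := by
      intro a i j hc
      have h1 := (hx a).1
      rw [mem_hypA_iff] at h1
      have hnp : ∀ i j, c i j * wtAux E (F₁ a) (F₂ a) i j ≤ 0 := by
        intro i j
        by_cases h : c i j = 0
        · simp [h]
        · exact mul_nonpos_of_nonneg_of_nonpos (hc0 i j)
            (wt_key E (hF a).1 i j (hcE i j h)).1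
      have h0 := double_sum_zero hnp h1 i j
      rcases mul_eq_zero.mp h0 with h | h
      · exact absurd h hc
      · exact ((wt_key E (hF a).1 i j (hcE i j hc)).2).mp h
    exact ⟨c, hc0, fun i j h a => hz a i j h, rfl⟩
  · rintro ⟨c, hc0, hcA, rfl⟩ a
    constructor
    · rw [mem_hypA_iff]
      refine Finset.sum_eq_zero fun i _ => Finset.sum_eq_zero fun j _ => ?_
      by_cases h : c i j = 0
      · simp [h]
      · rw [((wt_key E (hF a).1 i j (hcA i j h a).1).2).mpr (hcA i j h a), mul_zero]
    · exact ⟨c, hc0, fun i j h => (hcA i j h a).1, rfl⟩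

end ToricBipartite
end
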